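/- Let X be a finite nonempty set with a metric d, let W be a finite nonempty action set and ℓ : W → X → ℝ a loss function. Let M : X → Y → ℝ and M' : X → Y' → ℝ be d-private channels and let 0 < p < 1. Define the external probabilistic choice M ⊕_p M' : X → (Y ⊎ Y') → ℝ by (M ⊕_p M') x (inl y) = p · M x y and (M ⊕_p M') x (inr y') = (1−p) · M' x y'. Then M ⊕_p M' is a d-private channel, and M ⊕_p M' is universally ℓ-optimal within the d-privacy type if and only if both M and M' are universally ℓ-optimal within the d-privacy type. -/

import Mathlib

open Finset

/-- A channel from `X` to `Y`: nonnegative entries and each row sums to 1. -/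
def IsChannel {X Y : Type} [Fintype Y] (M : X → Y → ℝ) : Prop :=
  (∀ x y, 0 ≤ M x y) ∧ ∀ x, ∑ y, M x y = 1

/-- The `d`-privacy constraints on a channel. -/
def IsPrivate {X Y : Type} (d : X → X → ℝ) (M : X → Y → ℝ) : Prop :=
  ∀ x x' y, M x y ≤ Real.exp (d x x') * M x' y

/-- `d` is a metric on `X`. -/
def IsMetric {X : Type} (d : X → X → ℝ) : Prop :=
  (∀ x, d x x = 0) ∧ (∀ x x' : X, x ≠ x' → 0 < d x x') ∧
    (∀ x x', d x x' = d x' x) ∧ ∀ x y z, d x z ≤ d x y + d y z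

/-- A prior on `X`. -/
def IsPrior {X : Type} [Fintype X] (π : X → ℝ) : Prop :=
  (∀ x, 0 ≤ π x) ∧ ∑ x, π x = 1

/-- Posterior expected loss `U_ℓ[π⟩M]`. -/
noncomputable def postLoss {X Y W : Type} [Fintype X] [Fintype Y] [Fintype W] [Nonempty W]
    (π : X → ℝ) (M : X → Y → ℝ) (ℓ : W → X → ℝ) : ℝ :=
  ∑ y, Finset.univ.inf' Finset.univ_nonempty fun w => ∑ x, π x * M x y * ℓ w x

/-- Universal `ℓ`-optimality within the `d`-privacy type. -/
def UnivOptimal {X W Y : Type} [Fintype X] [Fintype W] [Nonempty W] [Fintype Y]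
    (d : X → X → ℝ) (M : X → Y → ℝ) (ℓ : W → X → ℝ) : Prop :=
  ∀ (Y'' : Type) [Fintype Y''] [Nonempty Y''] (N : X → Y'' → ℝ),
    IsChannel N → IsPrivate d N →
      ∀ π : X → ℝ, IsPrior π → postLoss π M ℓ ≤ postLoss π N ℓ

/-- The external probabilistic choice `M ⊕_p M'`. -/
def pChoice {X Y Y' : Type} (p : ℝ) (M : X → Y → ℝ) (M' : X → Y' → ℝ) :
    X → Y ⊕ Y' → ℝ :=
  fun x => Sum.elim (fun y => p * M x y) (fun y' => (1 - p) * M' x y')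

lemma pChoice_isChannel {X Y Y' : Type} [Fintype Y] [Fintype Y']
    {M : X → Y → ℝ} {M' : X → Y' → ℝ} (hM : IsChannel M) (hM' : IsChannel M')
    {p : ℝ} (hp0 : 0 ≤ p) (hp1 : p ≤ 1) : IsChannel (pChoice p M M') := by
  constructor
  · rintro x (y | y')
    · exact mul_nonneg hp0 (hM.1 x y)
    · exact mul_nonneg (by linarith) (hM'.1 x y')
  · intro x
    simp only [pChoice, Fintype.sum_sum_type, Sum.elim_inl, Sum.elim_inr,
      ← Finset.mul_sum, hM.2 x, hM'.2 x]
    ring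

lemma pChoice_isPrivate {X Y Y' : Type} {d : X → X → ℝ}
    {M : X → Y → ℝ} {M' : X → Y' → ℝ} (hMp : IsPrivate d M) (hM'p : IsPrivate d M')
    {p : ℝ} (hp0 : 0 ≤ p) (hp1 : p ≤ 1) : IsPrivate d (pChoice p M M') := by
  rintro x x' (y | y')
  · have := hMp x x' y
    simp only [pChoice, Sum.elim_inl]
    calc p * M x y ≤ p * (Real.exp (d x x') * M x' y) :=
          mul_le_mul_of_nonneg_left this hp0
      _ = Real.exp (d x x') * (p * M x' y) := by ring
  · have := hM'p x x' y'
    simp only [pChoice, Sum.elim_inr]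
    calc (1 - p) * M' x y' ≤ (1 - p) * (Real.exp (d x x') * M' x' y') :=
          mul_le_mul_of_nonneg_left this (by linarith)
      _ = Real.exp (d x x') * ((1 - p) * M' x' y') := by ring

lemma postLoss_pChoice {X Y Y' W : Type} [Fintype X] [Fintype Y] [Fintype Y']
    [Fintype W] [Nonempty W]
    (π : X → ℝ) (M : X → Y → ℝ) (M' : X → Y' → ℝ) (ℓ : W → X → ℝ)
    {p : ℝ} (hp0 : 0 ≤ p) (hp1 : p ≤ 1) :
    postLoss π (pChoice p M M') ℓ = p * postLoss π M ℓ + (1 - p) * postLoss π M' ℓ := by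
  unfold postLoss
  rw [Fintype.sum_sum_type, Finset.mul_sum, Finset.mul_sum]
  congr 1
  · refine Finset.sum_congr rfl fun y _ => ?_
    rw [Finset.apply_inf'_eq_inf'_comp _ (fun r => p * r)
      (fun a b => mul_min_of_nonneg a b hp0)]
    congr 1; ext w
    simp only [Function.comp, pChoice, Sum.elim_inl, Finset.mul_sum]
    exact Finset.sum_congr rfl fun x _ => by ring
  · refine Finset.sum_congr rfl fun y _ => ?_
    rw [Finset.apply_inf'_eq_inf'_comp _ (fun r => (1 - p) * r)
      (fun a b => mul_min_of_nonneg a b (by linarith))]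
    congr 1; ext w
    simp only [Function.comp, pChoice, Sum.elim_inr, Finset.mul_sum]
    exact Finset.sum_congr rfl fun x _ => by ring

/-- `M ⊕_p M'` is a `d`-private channel, and it is universally `ℓ`-optimal
iff both `M` and `M'` are. -/
theorem pChoice_channel_private_and_optimal_iff
    {X Y Y' W : Type} [Fintype X] [Nonempty X] [Fintype Y] [Nonempty Y]
    [Fintype Y'] [Nonempty Y'] [Fintype W] [Nonempty W]
    (d : X → X → ℝ) (hd : IsMetric d) (ℓ : W → X → ℝ)
    (M : X → Y → ℝ) (hM : IsChannel M) (hMp : IsPrivate d M)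
    (M' : X → Y' → ℝ) (hM' : IsChannel M') (hM'p : IsPrivate d M')
    (p : ℝ) (hp0 : 0 < p) (hp1 : p < 1) :
    IsChannel (pChoice p M M') ∧ IsPrivate d (pChoice p M M') ∧
      (UnivOptimal d (pChoice p M M') ℓ ↔
        UnivOptimal d M ℓ ∧ UnivOptimal d M' ℓ) := by
  have hp0' : (0:ℝ) ≤ p := hp0.le
  have hp1' : p ≤ 1 := hp1.le
  refine ⟨pChoice_isChannel hM hM' hp0' hp1', pChoice_isPrivate hMp hM'p hp0' hp1', ?_⟩
  constructor
  · intro h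
    constructor
    · intro Y'' _ _ N hN hNp π hπ
      have key := h (Y'' ⊕ Y') (pChoice p N M')
        (pChoice_isChannel hN hM' hp0' hp1') (pChoice_isPrivate hNp hM'p hp0' hp1') π hπ
      rw [postLoss_pChoice π M M' ℓ hp0' hp1',
        postLoss_pChoice π N M' ℓ hp0' hp1'] at key
      nlinarith
    · intro Y'' _ _ N hN hNp π hπ
      have key := h (Y ⊕ Y'') (pChoice p M N)
        (pChoice_isChannel hM hN hp0' hp1') (pChoice_isPrivate hMp hNp hp0' hp1') π hπ
      rw [postLoss_pChoice π M M' ℓ hp0' hp1',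
        postLoss_pChoice π M N ℓ hp0' hp1'] at key
      nlinarith
  · rintro ⟨h1, h2⟩ Y'' _ _ N hN hNp π hπ
    have k1 := h1 Y'' N hN hNp π hπ
    have k2 := h2 Y'' N hN hNp π hπ
    rw [postLoss_pChoice π M M' ℓ hp0' hp1']
    nlinarith
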